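/- Let μ = (μ₁ ≥ … ≥ μₙ ≥ 0) be a partition and let ν ∈ {0,1}ⁿ be such that μ + ν is NOT weakly decreasing. Then in ℂ(q), ∏_{i≠j, ν_i=0, ν_j=1} (q^{2k} − q^{2(μ_i − μ_j + k(j−i))}) / (1 − q^{2(μ_i − μ_j + k(j−i))}) = 0, where the product is over all ordered pairs i ≠ j with ν_i = 0 and ν_j = 1; moreover every denominator factor 1 − q^{2(μ_i − μ_j + k(j−i))} occurring in this product is nonzero. (That is, upon specializing the coefficients of the Macdonald operator M_r at x = q^{2(μ+kρ)}, all terms T_ν with μ + ν not dominant drop out.) -/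

import Mathlib

open scoped BigOperators
noncomputable section

/-- The coefficient field `F = ℂ(q)`. -/
abbrev F : Type := RatFunc ℂ

/-- The Laurent polynomial ring `Lₙ = F[x₁^{±1},…,xₙ^{±1}]`, realized as the group
algebra of `ℤⁿ` over `F`. -/
abbrev Lp (n : ℕ) : Type := AddMonoidAlgebra F (Fin n → ℤ)

/-- The indeterminate `q ∈ F = ℂ(q)`. -/
def q : F := RatFunc.X

/-- The exponent vector of the variable `x_i`. -/
def ee {n : ℕ} (i : Fin n) : Fin n → ℤ := Pi.single i 1

/-- The monomial `x^d`. -/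
def mono {n : ℕ} (d : Fin n → ℤ) : Lp n := AddMonoidAlgebra.single d 1

/-- `Sₙ`-invariance of a Laurent polynomial (invariance under permuting the variables). -/
def SymInv {n : ℕ} (f : Lp n) : Prop :=
  ∀ σ : Equiv.Perm (Fin n), Finsupp.mapDomain (fun d => d ∘ σ) f.coeff = f.coeff

/-- The bar involution `f̄(x₁,…,xₙ) = f(x₁⁻¹,…,xₙ⁻¹)`. -/
def bar {n : ℕ} (f : Lp n) : Lp n := AddMonoidAlgebra.ofCoeff (Finsupp.mapDomain (fun d => -d) f.coeff)

/-- The Macdonald density `Δ_k = ∏_{i≠j} ∏_{m=0}^{k-1} (1 - q^{2m} x_i/x_j)`. -/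
def Δ (n k : ℕ) : Lp n :=
  ∏ p ∈ (Finset.univ : Finset (Fin n × Fin n)).filter (fun p => p.1 ≠ p.2),
    ∏ m ∈ Finset.range k,
      (1 - AddMonoidAlgebra.single (ee p.1 - ee p.2) (q ^ (2 * m)))

/-- The Macdonald inner product `⟨f,g⟩_k = (1/n!)·CT(f·ḡ·Δ_k)`, where `CT` is the
constant term (coefficient of `x₁⁰⋯xₙ⁰`). -/
def ip (n k : ℕ) (f g : Lp n) : F :=
  ((n.factorial : F))⁻¹ * (f * bar g * Δ n k).coeff 0

/-- The orbit sum `m_λ = Σ_{μ ∈ Sₙλ} x^μ` (sum over distinct rearrangements of `λ`). -/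
def orb {n : ℕ} (l : Fin n → ℕ) : Lp n :=
  ∑ d ∈ Finset.image (fun σ : Equiv.Perm (Fin n) => fun i => ((l (σ i) : ℤ)))
      Finset.univ, mono d

/-- Dominance order: `μ ≤ λ` iff the total sums agree and all partial sums satisfy
`μ₁+…+μ_j ≤ λ₁+…+λ_j`. -/
def domLE {n : ℕ} (m l : Fin n → ℕ) : Prop :=
  (∑ i, m i = ∑ i, l i) ∧
  ∀ j : Fin n, ∑ i ∈ Finset.univ.filter (fun i => i ≤ j), m i ≤
    ∑ i ∈ Finset.univ.filter (fun i => i ≤ j), l i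

/-- Strict dominance order. -/
def domLT {n : ℕ} (m l : Fin n → ℕ) : Prop := domLE m l ∧ m ≠ l

/-- `P` is *the* family of Macdonald polynomials for `A_{n-1}` with parameters
`(q², q^{2k})`: for every partition `λ` (an antitone `l : Fin n → ℕ`), `P l` is
`Sₙ`-invariant, `P λ = m_λ + Σ_{μ<λ} c_{λμ} m_μ`, and distinct members are
orthogonal for `⟨·,·⟩_k`. -/
def IsMacFamily (n k : ℕ) (P : (Fin n → ℕ) → Lp n) : Prop :=
  (∀ l, Antitone l → SymInv (P l)) ∧
  (∀ l, Antitone l → P l - orb l ∈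
    Submodule.span F ((fun m : Fin n → ℕ => orb m) '' {m | Antitone m ∧ domLT m l})) ∧
  (∀ l m, Antitone l → Antitone m → l ≠ m → ip n k (P l) (P m) = 0)

/-- `a_{ij} = l_i − l_j + k(j−i)`, i.e. `(α, λ + kρ)` for the root `α = e_i − e_j`. -/
def aexp {n : ℕ} (k : ℕ) (l : Fin n → ℕ) (i j : Fin n) : ℤ :=
  (l i : ℤ) - (l j : ℤ) + (k : ℤ) * (((j : ℕ) : ℤ) - ((i : ℕ) : ℤ))

/-- The `q`-number `[a] = (q^a − q^{−a})/(q − q^{−1})`. -/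
def br (a : ℤ) : F := (q ^ a - q ^ (-a)) / (q - q⁻¹)

/-- The weight `2μ_i + k(n+1−2i)` (with `i` running through `1,…,n`), so that
`x_i = q^{wt n k μ i}` is the evaluation point `x = q^{2(μ+kρ)}`. -/
def wt (n k : ℕ) (l : Fin n → ℕ) (i : Fin n) : ℤ :=
  2 * (l i : ℤ) + (k : ℤ) * ((n : ℤ) - 1 - 2 * ((i : ℕ) : ℤ))

/-- Evaluation of a Laurent polynomial at the point `x_i = q^{w i}`. -/
def evAt {n : ℕ} (w : Fin n → ℤ) (f : Lp n) : F :=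
  f.coeff.sum (fun d c => c * q ^ (∑ i, w i * d i))


lemma q_pow_ne_one' {m : ℕ} (hm : m ≠ 0) : q ^ m ≠ 1 := by
  intro h
  have hX : (Polynomial.X : Polynomial ℂ) ^ m = 1 := by
    apply RatFunc.algebraMap_injective ℂ
    simpa [q, map_pow, RatFunc.algebraMap_X] using h
  have := congrArg Polynomial.natDegree hX
  simp [Polynomial.natDegree_X_pow] at this
  exact hm this

lemma one_sub_q_zpow_ne' {a : ℤ} (ha : a ≠ 0) : (1 : F) - q ^ a ≠ 0 := by
  have h : q ^ a ≠ 1 := by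
    rcases lt_or_gt_of_ne ha with h | h
    · intro hq
      have h2 : q ^ ((-a).toNat) = 1 := by
        have h3 : q ^ (-a) = 1 := by rw [zpow_neg, hq, inv_one]
        rw [← zpow_natCast, Int.toNat_of_nonneg (by omega)]; exact h3
      exact q_pow_ne_one' (by omega) h2
    · intro hq
      have h2 : q ^ (a.toNat) = 1 := by
        rw [← zpow_natCast, Int.toNat_of_nonneg (by omega)]; exact hq
      exact q_pow_ne_one' (by omega) h2
  intro h0
  exact h (sub_eq_zero.mp h0).symm

lemma exists_adjacent_pair {n : ℕ} (μ ν : Fin n → ℕ) (hμ : Antitone μ)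
    (hν : ∀ i, ν i ≤ 1) (hnd : ¬ Antitone (fun i => μ i + ν i)) :
    ∃ t s : Fin n, (t : ℕ) + 1 = (s : ℕ) ∧ ν t = 0 ∧ ν s = 1 ∧ μ t = μ s := by
  rw [Antitone] at hnd
  push_neg at hnd
  obtain ⟨i, j, hij, hlt⟩ := hnd
  have hμji : μ j ≤ μ i := hμ hij
  have h0 : ν i = 0 := by have := hν i; have := hν j; omega
  have h1 : ν j = 1 := by have := hν i; have := hν j; omega
  have hμij : μ i = μ j := by have := hν i; have := hν j; omega
  have hvij : (i : ℕ) < (j : ℕ) := by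
    rcases lt_or_eq_of_le (Fin.le_def.mp hij) with h | h
    · exact h
    · exact absurd (Fin.ext h) (by intro he; rw [he] at h0; omega)
  have key : ∀ d (i j : Fin n), (j : ℕ) - (i : ℕ) ≤ d → (i : ℕ) < (j : ℕ) →
      ν i = 0 → ν j = 1 → μ i = μ j →
      ∃ t s : Fin n, (t : ℕ) + 1 = (s : ℕ) ∧ ν t = 0 ∧ ν s = 1 ∧ μ t = μ s := by
    intro d
    induction d with
    | zero => intro i j hle hlt _ _ _; omega
    | succ d ih =>
      intro i j hle hlt h0 h1 hμij
      by_cases hadj : (i : ℕ) + 1 = (j : ℕ)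
      · exact ⟨i, j, hadj, h0, h1, hμij⟩
      · have hm : (i : ℕ) + 1 < n := by have := j.isLt; omega
        set m : Fin n := ⟨(i : ℕ) + 1, hm⟩ with hmdef
        have him : i ≤ m := Fin.le_def.mpr (by simp [hmdef])
        have hmj : (m : ℕ) < (j : ℕ) := by simp [hmdef]; omega
        have hμm1 : μ m ≤ μ i := hμ him
        have hμm2 : μ j ≤ μ m := hμ (Fin.le_def.mpr hmj.le)
        have hμim : μ i = μ m := by omega
        rcases Nat.lt_or_ge (ν m) 1 with hv | hv
        · exact ih m j (by simp [hmdef]; omega) hmj (by omega) h1 (by omega)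
        · exact ⟨i, m, by simp [hmdef], h0, by have := hν m; omega, hμim⟩
  exact key ((j : ℕ) - (i : ℕ)) i j le_rfl hvij h0 h1 hμij

/-- **Vanishing of non-dominant terms in the specialized Macdonald operator:**
if `μ` is a partition and `ν ∈ {0,1}ⁿ` is such that `μ + ν` is *not* weakly
decreasing, then every denominator factor `1 − q^{2(μ_i−μ_j+k(j−i))}` (over ordered
pairs `i ≠ j` with `ν_i = 0, ν_j = 1`) is nonzero, and
`∏_{i≠j, ν_i=0, ν_j=1} (q^{2k} − q^{2(μ_i−μ_j+k(j−i))})/(1 − q^{2(μ_i−μ_j+k(j−i))}) = 0`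
in `ℂ(q)`. -/
theorem specialized_coefficient_vanishes (n k : ℕ) (hn : 2 ≤ n) (hk : 1 ≤ k)
    (μ : Fin n → ℕ) (hμ : Antitone μ)
    (ν : Fin n → ℕ) (hν : ∀ i, ν i ≤ 1)
    (hnd : ¬ Antitone (fun i => μ i + ν i)) :
    (∀ i j : Fin n, i ≠ j → ν i = 0 → ν j = 1 →
      (1 : F) - q ^ (2 * aexp k μ i j) ≠ 0) ∧
    ∏ p ∈ (Finset.univ : Finset (Fin n × Fin n)).filter
        (fun p => p.1 ≠ p.2 ∧ ν p.1 = 0 ∧ ν p.2 = 1),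
      (q ^ (2 * k) - q ^ (2 * aexp k μ p.1 p.2)) /
      (1 - q ^ (2 * aexp k μ p.1 p.2)) = 0 := by
  have haexp : ∀ i j : Fin n, i ≠ j → aexp k μ i j ≠ 0 := by
    intro i j hij
    have hv : (i : ℕ) ≠ (j : ℕ) := fun h => hij (Fin.ext h)
    unfold aexp
    rcases Nat.lt_or_ge (i : ℕ) (j : ℕ) with h | h
    · have := hμ (Fin.le_def.mpr h.le)
      have hpos : 0 < (k : ℤ) * (((j : ℕ) : ℤ) - ((i : ℕ) : ℤ)) :=
        mul_pos (by omega) (by omega)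
      omega
    · have := hμ (Fin.le_def.mpr (by omega : (j : ℕ) ≤ (i : ℕ)))
      have hneg : (k : ℤ) * (((j : ℕ) : ℤ) - ((i : ℕ) : ℤ)) < 0 :=
        mul_neg_of_pos_of_neg (by omega) (by omega)
      omega
  constructor
  · intro i j hij _ _
    exact one_sub_q_zpow_ne' (by have := haexp i j hij; omega)
  · obtain ⟨t, s, hts, h0, h1, hμts⟩ := exists_adjacent_pair μ ν hμ hν hnd
    have htsne : t ≠ s := by
      intro h
      exact absurd (congrArg Fin.val h) (by omega)
    apply Finset.prod_eq_zero (i := (t, s))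
    · simp only [Finset.mem_filter, Finset.mem_univ, true_and]
      exact ⟨htsne, h0, h1⟩
    · have ha : aexp k μ t s = (k : ℤ) := by
        unfold aexp
        have h1 : ((s : ℕ) : ℤ) - ((t : ℕ) : ℤ) = 1 := by omega
        rw [h1, mul_one]
        omega
      rw [ha]
      have : q ^ (2 * (k : ℤ)) = q ^ (2 * k) := by
        rw [← zpow_natCast]
        norm_num
      rw [this, sub_self, zero_div]
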